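/- arXiv:2601.03876 — 4 statements merged into one kernel-verified Lean document; each statement's English description precedes it below -/
import Mathlib

section
/- For all x with 0 ≤ x ≤ 1, the Rogers dilogarithm satisfies the duplication identity 2·𝓛(x) = 𝓛(x²) + 2·𝓛(x/(1+x)). -/
open Real MeasureTheory

open Set Filter Topology

/-- The real dilogarithm, defined for `x ≤ 1` via the integral
`Li₂(x) = -∫₀ˣ log(1-t)/t dt`. -/
noncomputable def Li2 (x : ℝ) : ℝ := -∫ t in (0:ℝ)..x, Real.log (1 - t) / t

/-- The Rogers dilogarithm `𝓛(x) = Li₂(x) + (1/2)·log|x|·log(1-x)`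
(note `Real.log` of a negative number is the log of its absolute value,
and `Real.log 0 = 0`, so this formula also covers `x ≤ 0` and the endpoints). -/
noncomputable def rogersL (x : ℝ) : ℝ := Li2 x + (1/2) * Real.log x * Real.log (1 - x)

/-- Continuous extension of `t ↦ log(1-t)/t` (value `-1` at `t = 0`). -/
noncomputable def hfun (t : ℝ) : ℝ := if t = 0 then -1 else Real.log (1 - t) / t

lemma hfun_eq {t : ℝ} (ht : t ≠ 0) : hfun t = Real.log (1 - t) / t := if_neg ht

lemma measurable_hfun : Measurable hfun := by
  unfold hfun
  exact Measurable.ite (measurableSet_eq_fun measurable_id measurable_const)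
    measurable_const
    ((Real.measurable_log.comp (measurable_const.sub measurable_id)).div measurable_id)

lemma continuousAt_hfun {t : ℝ} (ht : t < 1) : ContinuousAt hfun t := by
  rcases eq_or_ne t 0 with rfl | h0
  · have hd : HasDerivAt (fun u : ℝ => Real.log (1 - u)) (-1) 0 := by
      have h1 : HasDerivAt (fun u : ℝ => 1 - u) (-1) 0 := by
        simpa using (hasDerivAt_id (0:ℝ)).const_sub 1
      have := (Real.hasDerivAt_log (by norm_num : (1:ℝ) - 0 ≠ 0)).comp 0 h1
      simp at this; exact this
    have hslope := hasDerivAt_iff_tendsto_slope.mp hd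
    have hs : ∀ u : ℝ, u ≠ 0 → slope (fun u : ℝ => Real.log (1 - u)) 0 u = hfun u := by
      intro u hu
      rw [hfun_eq hu, slope_def_field]
      simp [div_eq_div_iff]
    have htend : Tendsto hfun (𝓝[≠] (0:ℝ)) (𝓝 (-1)) := by
      refine hslope.congr' ?_
      filter_upwards [self_mem_nhdsWithin] with u hu
      exact hs u hu
    rw [ContinuousAt]
    have h0v : hfun 0 = -1 := if_pos rfl
    rw [h0v, ← nhdsNE_sup_pure (0:ℝ), tendsto_sup]
    refine ⟨htend, ?_⟩
    simpa [h0v] using tendsto_pure_nhds hfun 0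
  · have : ContinuousAt (fun u : ℝ => Real.log (1 - u) / u) t := by
      exact (((continuous_const.sub continuous_id).continuousAt).log
        (by simp; intro h; linarith)).div continuousAt_id h0
    refine this.congr ?_
    filter_upwards [isOpen_ne.mem_nhds h0] with u hu
    exact (hfun_eq hu).symm

lemma integrableOn_log_Ioc : IntegrableOn Real.log (Ioc (0:ℝ) 1) := by
  have hg : IntegrableOn (fun t : ℝ => 2 * t ^ (-(1/2) : ℝ)) (Ioc (0:ℝ) 1) := by
    have h := intervalIntegral.intervalIntegrable_rpow'
      (show (-1:ℝ) < -(1/2) by norm_num) (a := (0:ℝ)) (b := 1)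
    rw [intervalIntegrable_iff_integrableOn_Ioc_of_le (by norm_num : (0:ℝ) ≤ 1)] at h
    exact h.const_mul 2
  refine hg.mono' Real.measurable_log.aestronglyMeasurable ?_
  filter_upwards [ae_restrict_mem measurableSet_Ioc] with t ht
  have ht0 : 0 < t := ht.1
  have hs : 0 < Real.sqrt t := Real.sqrt_pos.mpr ht0
  have h1 : Real.log (Real.sqrt t)⁻¹ ≤ (Real.sqrt t)⁻¹ :=
    le_trans (Real.log_le_sub_one_of_pos (inv_pos.mpr hs)) (by linarith)
  have h2 : -Real.log t = 2 * Real.log (Real.sqrt t)⁻¹ := by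
    rw [Real.log_inv, Real.log_sqrt ht0.le]; ring
  have h3 : t ^ (-(1/2) : ℝ) = (Real.sqrt t)⁻¹ := by
    rw [Real.rpow_neg ht0.le, Real.sqrt_eq_rpow]
  have hlt : Real.log t ≤ 0 := Real.log_nonpos ht0.le ht.2
  have hnn : (0:ℝ) ≤ 2 * t ^ (-(1/2) : ℝ) := by
    rw [h3]; positivity
  rw [Real.norm_eq_abs, abs_of_nonpos hlt, h3]
  linarith

lemma intervalIntegrable_log01 : IntervalIntegrable Real.log volume 0 1 := by
  rw [intervalIntegrable_iff_integrableOn_Ioc_of_le (by norm_num : (0:ℝ) ≤ 1)]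
  exact integrableOn_log_Ioc

lemma intervalIntegrable_log_one_sub :
    IntervalIntegrable (fun t : ℝ => Real.log (1 - t)) volume 0 1 := by
  have := intervalIntegrable_log01.comp_sub_left 1
  simpa using this.symm

lemma hfun_intervalIntegrable : IntervalIntegrable hfun volume 0 1 := by
  have h1 : IntervalIntegrable hfun volume 0 (1/2) := by
    apply ContinuousOn.intervalIntegrable
    intro u hu
    rw [uIcc_of_le (by norm_num : (0:ℝ) ≤ 1/2)] at hu
    exact (continuousAt_hfun (by linarith [hu.2])).continuousWithinAt
  have h2 : IntervalIntegrable hfun volume (1/2) 1 := by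
    rw [intervalIntegrable_iff_integrableOn_Ioc_of_le (by norm_num : (1:ℝ)/2 ≤ 1)]
    have hg : IntegrableOn (fun t : ℝ => 2 * |Real.log (1 - t)|) (Ioc (1/2 : ℝ) 1) := by
      have := intervalIntegrable_log_one_sub.mono_set
        (by rw [uIcc_of_le (by norm_num : (1:ℝ)/2 ≤ 1), uIcc_of_le (by norm_num : (0:ℝ) ≤ 1)]
            exact Icc_subset_Icc (by norm_num) le_rfl)
      rw [intervalIntegrable_iff_integrableOn_Ioc_of_le (by norm_num : (1:ℝ)/2 ≤ 1)] at this
      exact this.abs.const_mul 2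
    refine hg.mono' (measurable_hfun.aestronglyMeasurable) ?_
    filter_upwards [ae_restrict_mem measurableSet_Ioc] with t ht
    have ht0 : (0:ℝ) < t := lt_trans (by norm_num) ht.1
    rw [hfun_eq ht0.ne', Real.norm_eq_abs, abs_div, abs_of_pos ht0, div_le_iff₀ ht0]
    nlinarith [abs_nonneg (Real.log (1 - t)), ht.1]
  exact h1.trans h2

lemma Li2_eq (x : ℝ) : Li2 x = -∫ t in (0:ℝ)..x, hfun t := by
  unfold Li2
  congr 1
  apply intervalIntegral.integral_congr_ae
  have h0 : ∀ᵐ t : ℝ, t ≠ 0 := by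
    have hset : {t : ℝ | ¬ t ≠ 0} = {0} := by ext t; simp
    rw [ae_iff, hset]
    exact measure_singleton 0
  filter_upwards [h0] with t ht _
  exact (hfun_eq ht).symm

lemma hfun_intervalIntegrable' {a b : ℝ} (ha : a ∈ Icc (0:ℝ) 1) (hb : b ∈ Icc (0:ℝ) 1) :
    IntervalIntegrable hfun volume a b :=
  hfun_intervalIntegrable.mono_set (by
    rw [uIcc_of_le (by norm_num : (0:ℝ) ≤ 1)]
    exact uIcc_subset_Icc ha hb)

lemma Li2_hasDerivAt {x : ℝ} (hx : x ∈ Ioo (0:ℝ) 1) :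
    HasDerivAt Li2 (-(Real.log (1 - x) / x)) x := by
  have hint : IntervalIntegrable hfun volume 0 x :=
    hfun_intervalIntegrable' (by simp) ⟨hx.1.le, hx.2.le⟩
  have hmeas : StronglyMeasurableAtFilter hfun (𝓝 x) volume :=
    ⟨univ, univ_mem, measurable_hfun.aestronglyMeasurable⟩
  have hd : HasDerivAt (fun u => ∫ t in (0:ℝ)..u, hfun t) (hfun x) x :=
    intervalIntegral.integral_hasDerivAt_right hint hmeas (continuousAt_hfun hx.2)
  have : HasDerivAt (fun u => -∫ t in (0:ℝ)..u, hfun t) (-(Real.log (1 - x) / x)) x := by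
    rw [← hfun_eq hx.1.ne']
    exact hd.neg
  exact this.congr_of_eventuallyEq (Filter.Eventually.of_forall fun u => Li2_eq u)

lemma rogersL_hasDerivAt {x : ℝ} (hx : x ∈ Ioo (0:ℝ) 1) :
    HasDerivAt rogersL
      (-(1/2) * (Real.log (1 - x) / x + Real.log x / (1 - x))) x := by
  have hx0 : x ≠ 0 := hx.1.ne'
  have hx1 : (1:ℝ) - x ≠ 0 := by have := hx.2; intro h; linarith
  have h1 : HasDerivAt (fun u : ℝ => Real.log u) x⁻¹ x := Real.hasDerivAt_log hx0
  have h2 : HasDerivAt (fun u : ℝ => Real.log (1 - u)) (-(1 - x)⁻¹) x := by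
    have hin : HasDerivAt (fun u : ℝ => 1 - u) (-1) x := by
      simpa using (hasDerivAt_id x).const_sub 1
    have := (Real.hasDerivAt_log hx1).comp x hin
    simp at this; exact this
  have hprod : HasDerivAt (fun u : ℝ => (1/2) * Real.log u * Real.log (1 - u))
      (((1/2) * x⁻¹) * Real.log (1 - x) + ((1/2) * Real.log x) * (-(1 - x)⁻¹)) x := by
    exact (h1.const_mul (1/2)).mul h2
  have := (Li2_hasDerivAt hx).add hprod
  have heq : -(Real.log (1 - x) / x) +
      (((1/2) * x⁻¹) * Real.log (1 - x) + ((1/2) * Real.log x) * (-(1 - x)⁻¹))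
      = -(1/2) * (Real.log (1 - x) / x + Real.log x / (1 - x)) := by
    field_simp
    ring
  rw [heq] at this
  exact this.congr_of_eventuallyEq (Filter.Eventually.of_forall fun u => rfl)

lemma continuous_loglog : Continuous (fun x : ℝ => Real.log x * Real.log (1 - x)) := by
  have key1 : ∀ x : ℝ, Real.log x * Real.log (1 - x) = (x * Real.log x) * hfun x := by
    intro x
    rcases eq_or_ne x 0 with rfl | hx
    · simp
    · rw [hfun_eq hx]; field_simp
  have key2 : ∀ x : ℝ, Real.log x * Real.log (1 - x) = ((1 - x) * Real.log (1 - x)) * hfun (1 - x) := by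
    intro x
    rcases eq_or_ne x 1 with rfl | hx
    · simp
    · have h1x : (1:ℝ) - x ≠ 0 := sub_ne_zero.mpr (by exact fun h => hx h.symm)
      rw [hfun_eq h1x]
      have : (1:ℝ) - (1 - x) = x := by ring
      rw [this]
      field_simp
  rw [continuous_iff_continuousAt]
  intro x
  rcases lt_or_ge x 1 with hx | hx
  · have : ContinuousAt (fun x : ℝ => (x * Real.log x) * hfun x) x :=
      (Real.continuous_mul_log.continuousAt).mul (continuousAt_hfun hx)
    exact this.congr (Filter.Eventually.of_forall fun u => (key1 u).symm)
  · have hlt : 1 - x < 1 := by linarith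
    have : ContinuousAt (fun x : ℝ => ((1 - x) * Real.log (1 - x)) * hfun (1 - x)) x := by
      have hc : ContinuousAt (fun x : ℝ => (1:ℝ) - x) x :=
        (continuous_const.sub continuous_id).continuousAt
      exact ((Real.continuous_mul_log.continuousAt).comp hc).mul
        ((continuousAt_hfun hlt).comp hc)
    exact this.congr (Filter.Eventually.of_forall fun u => (key2 u).symm)

lemma continuousOn_Li2 : ContinuousOn Li2 (Icc (0:ℝ) 1) := by
  have hint : IntegrableOn hfun (uIcc (0:ℝ) 1) volume := by
    have h := hfun_intervalIntegrable
    rw [intervalIntegrable_iff_integrableOn_Ioc_of_le (by norm_num : (0:ℝ) ≤ 1)] at h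
    rw [uIcc_of_le (by norm_num : (0:ℝ) ≤ 1), integrableOn_Icc_iff_integrableOn_Ioc]
    exact h
  have hcont := intervalIntegral.continuousOn_primitive_interval (a := (0:ℝ)) (b := 1) hint
  rw [uIcc_of_le (by norm_num : (0:ℝ) ≤ 1)] at hcont
  have : ContinuousOn (fun x => -∫ t in (0:ℝ)..x, hfun t) (Icc (0:ℝ) 1) := hcont.neg
  exact this.congr fun u _ => Li2_eq u

lemma continuousOn_rogersL : ContinuousOn rogersL (Icc (0:ℝ) 1) := by
  unfold rogersL
  refine continuousOn_Li2.add ?_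
  have : Continuous (fun x : ℝ => (1/2) * Real.log x * Real.log (1 - x)) := by
    have h2 : Continuous (fun x : ℝ => (1/2 : ℝ) * (Real.log x * Real.log (1 - x))) :=
      continuous_const.mul continuous_loglog
    simpa [mul_assoc] using h2
  exact this.continuousOn

/-- Duplication identity for the Rogers dilogarithm on `[0,1]`. -/
theorem rogersL_duplication (x : ℝ) (hx0 : 0 ≤ x) (hx1 : x ≤ 1) :
    2 * rogersL x = rogersL (x ^ 2) + 2 * rogersL (x / (1 + x)) := by
  set F : ℝ → ℝ := fun y => rogersL (y ^ 2) + 2 * rogersL (y / (1 + y)) - 2 * rogersL y with hF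
  -- continuity of F on [0,1]
  have hmaps1 : MapsTo (fun y : ℝ => y ^ 2) (Icc 0 1) (Icc 0 1) := by
    intro y hy
    refine ⟨by positivity, ?_⟩
    show y ^ 2 ≤ 1
    nlinarith [hy.1, hy.2]
  have hmaps2 : MapsTo (fun y : ℝ => y / (1 + y)) (Icc (0:ℝ) 1) (Icc 0 1) := by
    intro y hy
    have h1y : (0:ℝ) < 1 + y := by linarith [hy.1]
    constructor
    · exact div_nonneg hy.1 h1y.le
    · show y / (1 + y) ≤ 1
      rw [div_le_one h1y]; linarith [hy.2]
  have hc2 : ContinuousOn (fun y : ℝ => y / (1 + y)) (Icc (0:ℝ) 1) := by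
    apply ContinuousOn.div continuousOn_id (continuousOn_const.add continuousOn_id)
    intro y hy
    have : (0:ℝ) < 1 + y := by linarith [hy.1]
    exact this.ne'
  have hFcont : ContinuousOn F (Icc (0:ℝ) 1) := by
    refine ContinuousOn.sub (ContinuousOn.add ?_ ?_) ?_
    · exact continuousOn_rogersL.comp ((continuous_pow 2).continuousOn) hmaps1
    · exact continuousOn_const.mul (continuousOn_rogersL.comp hc2 hmaps2)
    · exact continuousOn_const.mul continuousOn_rogersL
  -- derivative of F is zero on (0,1)
  have hFd : ∀ y ∈ Ioo (0:ℝ) 1, HasDerivAt F 0 y := by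
    intro y hy
    have hy0 : (0:ℝ) < y := hy.1
    have hy1 : y < 1 := hy.2
    have h1my : (0:ℝ) < 1 - y := by linarith
    have h1py : (0:ℝ) < 1 + y := by linarith
    have hy2 : y ^ 2 ∈ Ioo (0:ℝ) 1 := ⟨by positivity, by nlinarith⟩
    have hu : y / (1 + y) ∈ Ioo (0:ℝ) 1 := by
      constructor
      · positivity
      · rw [div_lt_one h1py]; linarith
    have hpow : HasDerivAt (fun z : ℝ => z ^ 2) (2 * y) y := by
      simpa using hasDerivAt_pow 2 y
    have d1 := HasDerivAt.comp (h := fun z : ℝ => z ^ 2) y (rogersL_hasDerivAt hy2) hpow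
    have du : HasDerivAt (fun z : ℝ => z / (1 + z))
        ((1 * (1 + y) - y * 1) / (1 + y) ^ 2) y :=
      (hasDerivAt_id y).div ((hasDerivAt_id y).const_add 1) h1py.ne'
    have d2 := (HasDerivAt.comp (h := fun z : ℝ => z / (1 + z)) y
      (rogersL_hasDerivAt hu) du).const_mul 2
    have d3 := (rogersL_hasDerivAt hy).const_mul 2
    have dF := (d1.add d2).sub d3
    have hfinal : HasDerivAt F 0 y := by
      have dF' : HasDerivAt F _ y := dF
      convert dF' using 1
      have ha : Real.log (y ^ 2) = 2 * Real.log y := by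
        rw [Real.log_pow]; norm_num
      have hb : Real.log (1 - y ^ 2) = Real.log (1 - y) + Real.log (1 + y) := by
        rw [show (1:ℝ) - y ^ 2 = (1 - y) * (1 + y) by ring,
          Real.log_mul h1my.ne' h1py.ne']
      have hcc : Real.log (y / (1 + y)) = Real.log y - Real.log (1 + y) :=
        Real.log_div hy0.ne' h1py.ne'
      have hdd : Real.log (1 - y / (1 + y)) = -Real.log (1 + y) := by
        rw [show (1:ℝ) - y / (1 + y) = (1 + y)⁻¹ by field_simp; ring, Real.log_inv]
      have hne : (1:ℝ) - y / (1 + y) ≠ 0 := by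
        rw [show (1:ℝ) - y / (1 + y) = (1 + y)⁻¹ by field_simp; ring]
        positivity
      have hne2 : (1:ℝ) - y ^ 2 ≠ 0 := by nlinarith
      rw [ha, hb, hcc, hdd]
      field_simp [hy0.ne', h1my.ne', h1py.ne', hne2]
      ring
    exact hfinal
  -- F is constant on [0,1]
  have hdiff : DifferentiableOn ℝ F (interior (Icc (0:ℝ) 1)) := by
    rw [interior_Icc]
    exact fun y hy => ((hFd y hy).differentiableAt).differentiableWithinAt
  have hderiv0 : ∀ y ∈ interior (Icc (0:ℝ) 1), deriv F y = 0 := by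
    rw [interior_Icc]
    exact fun y hy => (hFd y hy).deriv
  have hmono : MonotoneOn F (Icc (0:ℝ) 1) :=
    monotoneOn_of_deriv_nonneg (convex_Icc 0 1) hFcont hdiff
      (fun y hy => (hderiv0 y hy).ge)
  have hanti : AntitoneOn F (Icc (0:ℝ) 1) :=
    antitoneOn_of_deriv_nonpos (convex_Icc 0 1) hFcont hdiff
      (fun y hy => (hderiv0 y hy).le)
  have h0mem : (0:ℝ) ∈ Icc (0:ℝ) 1 := by norm_num
  have hxmem : x ∈ Icc (0:ℝ) 1 := ⟨hx0, hx1⟩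
  have hFx : F x = F 0 :=
    le_antisymm (hanti h0mem hxmem hx0) (hmono h0mem hxmem hx0)
  have hrl0 : rogersL 0 = 0 := by
    simp [rogersL, Li2, intervalIntegral.integral_same]
  have hF0 : F 0 = 0 := by
    simp only [hF]
    norm_num [hrl0]
  rw [hF0] at hFx
  have : rogersL (x ^ 2) + 2 * rogersL (x / (1 + x)) - 2 * rogersL x = 0 := hFx
  linarith
end

section
/- For every L > 0, Φ(L) := (1/4)·log(1/(1−e^{−L}))·log((1+a)/(1−a)) + 2·∫_a^1 (−log t)/(1−t²) dt, where a = √(1 − e^{−L}), satisfies Φ(L) ≥ ((L+2)/4)·e^{−L}. -/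
open Real MeasureTheory

/-- Lower bound for the decomposed form of `Φ`. -/
theorem Phi_lower_bound (L : ℝ) (hL : 0 < L) (a : ℝ)
    (ha : a = Real.sqrt (1 - Real.exp (-L))) :
    (1 / 4) * Real.log (1 / (1 - Real.exp (-L))) * Real.log ((1 + a) / (1 - a))
        + 2 * ∫ t in a..(1 : ℝ), (-Real.log t) / (1 - t ^ 2)
      ≥ ((L + 2) / 4) * Real.exp (-L) := by
  have hE : Real.exp (-L) < 1 := by
    rw [Real.exp_lt_one_iff]; linarith
  have hE0 : (0:ℝ) < Real.exp (-L) := Real.exp_pos _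
  have h1e : 0 < 1 - Real.exp (-L) := by linarith
  have ha2 : a ^ 2 = 1 - Real.exp (-L) := by
    rw [ha, sq, Real.mul_self_sqrt h1e.le]
  have ha0 : 0 < a := by rw [ha]; exact Real.sqrt_pos.mpr h1e
  have ha1 : a < 1 := by nlinarith
  have key : (1 - a) * (1 + a) = Real.exp (-L) := by nlinarith
  -- first factor
  have hlog1 : Real.exp (-L) ≤ Real.log (1 / (1 - Real.exp (-L))) := by
    have h := Real.log_le_sub_one_of_pos h1e
    rw [one_div, Real.log_inv]; linarith
  -- second factor
  have hlog2 : L ≤ Real.log ((1 + a) / (1 - a)) := by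
    have hlm : Real.log (1 - a) + Real.log (1 + a) = -L := by
      rw [← Real.log_mul (by linarith) (by linarith), key, Real.log_exp]
    rw [Real.log_div (by linarith) (by linarith)]
    have := Real.log_nonneg (by linarith : (1:ℝ) ≤ 1 + a)
    linarith
  -- integrability of the integrand
  have hf : IntervalIntegrable (fun t => (-Real.log t) / (1 - t ^ 2)) volume a 1 := by
    rw [intervalIntegrable_iff_integrableOn_Ioc_of_le ha1.le]
    apply MeasureTheory.Integrable.mono' (g := fun _ => a⁻¹)
    · exact integrableOn_const measure_Ioc_lt_top.ne
    · exact (Real.measurable_log.neg.div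
        (measurable_const.sub (measurable_id.pow_const 2))).aestronglyMeasurable
    · refine (ae_restrict_iff' measurableSet_Ioc).mpr (ae_of_all _ ?_)
      intro t ht
      obtain ⟨hta, ht1⟩ := ht
      rcases eq_or_lt_of_le ht1 with rfl | ht1
      · simp [abs_of_nonneg]; positivity
      · have ht0 : 0 < t := lt_trans ha0 hta
        have hden : 0 < 1 - t ^ 2 := by nlinarith
        have hlt : -Real.log t ≤ t⁻¹ - 1 := by
          have h := Real.log_le_sub_one_of_pos (inv_pos.mpr ht0)
          rw [Real.log_inv] at h; linarith
        have hl0 : 0 ≤ -Real.log t := by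
          have := Real.log_nonpos ht0.le ht1.le; linarith
        rw [Real.norm_eq_abs, abs_of_nonneg (by positivity)]
        rw [div_le_iff₀ hden]
        have hti : t * t⁻¹ = 1 := mul_inv_cancel₀ ht0.ne'
        have h2 : a * (-Real.log t) ≤ t * (t⁻¹ - 1) := by
          have : a * (-Real.log t) ≤ t * (-Real.log t) :=
            mul_le_mul_of_nonneg_right hta.le hl0
          nlinarith
        have h3 : a * (-Real.log t) ≤ 1 - t ^ 2 := by nlinarith
        have h4 := mul_le_mul_of_nonneg_left h3 (inv_pos.mpr ha0).le
        have h5 : a⁻¹ * a = 1 := inv_mul_cancel₀ ha0.ne'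
        nlinarith
  -- comparison with 1/(1+t)
  have hg : IntervalIntegrable (fun t => (1 + t)⁻¹) volume a 1 := by
    apply ContinuousOn.intervalIntegrable
    apply ContinuousOn.inv₀ (by fun_prop)
    intro t ht
    rw [Set.uIcc_of_le ha1.le] at ht
    have := ht.1; intro h; linarith
  have hmono : (∫ t in a..(1:ℝ), (1 + t)⁻¹)
      ≤ ∫ t in a..(1:ℝ), (-Real.log t) / (1 - t ^ 2) := by
    apply intervalIntegral.integral_mono_ae_restrict ha1.le hg hf
    have h1 : ∀ᵐ t ∂(volume.restrict (Set.Icc a 1)), t ≠ (1:ℝ) := by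
      refine (ae_iff.mpr ?_)
      have : {t : ℝ | ¬ t ≠ 1} = {1} := by ext t; simp
      rw [this]
      exact le_antisymm ((Measure.restrict_apply_le _ _).trans_eq Real.volume_singleton)
        (zero_le)
    filter_upwards [h1, ae_restrict_mem measurableSet_Icc] with t ht1 htm
    obtain ⟨hta, htb⟩ := htm
    have ht1' : t < 1 := lt_of_le_of_ne htb ht1
    have ht0 : 0 < t := lt_of_lt_of_le ha0 hta
    have hden : 0 < 1 - t ^ 2 := by nlinarith
    have hlog : Real.log t ≤ t - 1 := Real.log_le_sub_one_of_pos ht0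
    rw [inv_eq_one_div, div_le_div_iff₀ (by linarith) hden]
    nlinarith
  -- value of the comparison integral
  have hcalc : (∫ t in a..(1:ℝ), (1 + t)⁻¹) = Real.log 2 - Real.log (1 + a) := by
    have h := intervalIntegral.integral_eq_sub_of_hasDerivAt
      (f := fun x => Real.log (1 + x)) (f' := fun t => (1 + t)⁻¹) (a := a) (b := 1)
      (fun t ht => by
        rw [Set.uIcc_of_le ha1.le] at ht
        have hpos : (0:ℝ) < 1 + t := by linarith [ht.1]
        simpa [one_div] using (((hasDerivAt_id t).const_add 1).log hpos.ne')) hg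
    rw [h]; norm_num
  -- elementary log bounds
  have hbnd1 : 1 - a ≤ 2 * (Real.log 2 - Real.log (1 + a)) := by
    have h := Real.log_le_sub_one_of_pos (show (0:ℝ) < (1 + a) / 2 by linarith)
    rw [Real.log_div (by linarith) two_ne_zero] at h
    linarith
  have hbnd2 : Real.exp (-L) / 2 ≤ 1 - a := by nlinarith
  have hI : Real.exp (-L) / 4 ≤ ∫ t in a..(1:ℝ), (-Real.log t) / (1 - t ^ 2) := by
    rw [hcalc] at hmono; linarith
  nlinarith [mul_le_mul hlog1 hlog2 hL.le (by linarith : (0:ℝ) ≤ Real.log (1 / (1 - Real.exp (-L))))]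
end

section
/- Let c < d be reals and let x < c. Then ∫_c^d log|((x−c)(x−d))/((y−c)(y−d))| / (y−x)² dy = (2/(x−d))·log|(x−c)/(d−c)| − (2/(x−c))·log|(x−d)/(c−d)|, interpreting the integral as an improper (convergent) integral at the endpoints y = c and y = d. -/
open Real MeasureTheory

/-- An explicit antiderivative of the inner integrand, continuous on `[c,d]`. -/
noncomputable def cuspF (x c d y : ℝ) : ℝ :=
  -((y - c) * Real.log (y - c)) / ((y - x) * (c - x))
  + ((d - y) * Real.log (d - y)) / ((y - x) * (d - x))
  + (1/(c-x) + 1/(d-x)) * Real.log (y - x)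
  - Real.log ((c-x)*(d-x)) / (y - x)

set_option maxHeartbeats 1000000 in
open Set in
/-- The inner integral of the cusp-lasso computation. -/
theorem inner_integral_eval (x c d : ℝ) (hxc : x < c) (hcd : c < d) :
    (∫ y in c..d,
        Real.log |((x - c) * (x - d)) / ((y - c) * (y - d))| / (y - x) ^ 2) =
      (2 / (x - d)) * Real.log |(x - c) / (d - c)|
        - (2 / (x - c)) * Real.log |(x - d) / (c - d)| := by
  have hcx : (0:ℝ) < c - x := by linarith
  have hdx : (0:ℝ) < d - x := by linarith
  have hdc : (0:ℝ) < d - c := by linarith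
  set f : ℝ → ℝ := fun y =>
    Real.log |((x - c) * (x - d)) / ((y - c) * (y - d))| / (y - x) ^ 2 with hf
  -- log decomposition on the open interval
  have hlog : ∀ y ∈ Ioo c d, Real.log |((x - c) * (x - d)) / ((y - c) * (y - d))|
      = Real.log ((c-x)*(d-x)) - Real.log (y - c) - Real.log (d - y) := by
    intro y hy
    have hA : (0:ℝ) < y - c := by linarith [hy.1]
    have hB : (0:ℝ) < d - y := by linarith [hy.2]
    have e0 : (x - c) * (x - d) = (c - x) * (d - x) := by ring
    have e1 : |(x - c) * (x - d)| = (c - x) * (d - x) := by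
      rw [e0, abs_of_pos (mul_pos hcx hdx)]
    have e2 : |(y - c) * (y - d)| = (y - c) * (d - y) := by
      rw [abs_of_neg (mul_neg_of_pos_of_neg hA (by linarith [hy.2]))]; ring
    rw [abs_div, e1, e2, Real.log_div (by positivity) (by positivity),
      Real.log_mul hA.ne' hB.ne']
    ring
  -- derivative of cuspF
  have hderiv : ∀ y ∈ Ioo c d, HasDerivAt (cuspF x c d) (f y) y := by
    intro y hy
    have hA : (0:ℝ) < y - c := by linarith [hy.1]
    have hB : (0:ℝ) < d - y := by linarith [hy.2]
    have hX : (0:ℝ) < y - x := by linarith [hy.1]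
    have hid := hasDerivAt_id y
    have hyc : HasDerivAt (fun y : ℝ => y - c) 1 y := hid.sub_const c
    have hdy : HasDerivAt (fun y : ℝ => d - y) (-1) y := by
      simpa using hid.const_sub d
    have hyx : HasDerivAt (fun y : ℝ => y - x) 1 y := hid.sub_const x
    have hlogA := hyc.log hA.ne'
    have hlogB := hdy.log hB.ne'
    have hlogX := hyx.log hX.ne'
    have h1 := ((hyc.mul hlogA).neg.div (hyx.mul_const (c - x))
      (mul_ne_zero hX.ne' hcx.ne'))
    have h2 := ((hdy.mul hlogB).div (hyx.mul_const (d - x))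
      (mul_ne_zero hX.ne' hdx.ne'))
    have h3 := hlogX.const_mul (1/(c-x) + 1/(d-x))
    have h4 := (hasDerivAt_const y (Real.log ((c-x)*(d-x)))).div hyx hX.ne'
    have H := ((h1.add h2).add h3).sub h4
    rw [hf]
    simp only [hlog y hy]
    refine H.congr_deriv ?_
    simp only [Pi.mul_apply, Pi.neg_apply]
    field_simp
    ring
  -- continuity of cuspF on [c,d]
  have hXne : ∀ y ∈ Icc c d, y - x ≠ 0 := fun y hy => by nlinarith [hy.1]
  have hcont : ContinuousOn (cuspF x c d) (Icc c d) := by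
    unfold cuspF
    refine ContinuousOn.sub (ContinuousOn.add (ContinuousOn.add ?_ ?_) ?_) ?_
    · exact ((Real.continuous_mul_log.comp
          (continuous_id.sub continuous_const)).neg.continuousOn).div
        (((continuous_id.sub continuous_const).mul continuous_const).continuousOn)
        (fun y hy => mul_ne_zero (hXne y hy) (by nlinarith))
    · exact ((Real.continuous_mul_log.comp
          (continuous_const.sub continuous_id)).continuousOn).div
        (((continuous_id.sub continuous_const).mul continuous_const).continuousOn)
        (fun y hy => mul_ne_zero (hXne y hy) (by nlinarith))
    · exact continuousOn_const.mul
        (((continuous_id.sub continuous_const).continuousOn).log hXne)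
    · exact continuousOn_const.div ((continuous_id.sub continuous_const).continuousOn) hXne
  -- integrability via the nonnegative-derivative trick
  set C0 : ℝ := 2 * |Real.log (d - c)| + |Real.log ((c-x)*(d-x))| with hC0
  have hcontw : ContinuousOn (fun y : ℝ => C0 / (y - x)) (Icc c d) :=
    continuousOn_const.div ((continuous_id.sub continuous_const).continuousOn) hXne
  have hcontG : ContinuousOn (fun y => cuspF x c d y - C0 / (y - x)) (Icc c d) :=
    hcont.sub hcontw
  have hderivG : ∀ y ∈ Ioo c d,
      HasDerivAt (fun y => cuspF x c d y - C0 / (y - x)) (f y + C0 / (y - x) ^ 2) y := by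
    intro y hy
    have hX : (0:ℝ) < y - x := by linarith [hy.1]
    have hw := (hasDerivAt_const y C0).div ((hasDerivAt_id y).sub_const x) hX.ne'
    have H := (hderiv y hy).sub hw
    refine H.congr_deriv ?_
    simp only [id_eq]
    ring
  have hnonneg : ∀ y ∈ Ioo c d, 0 ≤ f y + C0 / (y - x) ^ 2 := by
    intro y hy
    have hA : (0:ℝ) < y - c := by linarith [hy.1]
    have hB : (0:ℝ) < d - y := by linarith [hy.2]
    have hX : (0:ℝ) < y - x := by linarith [hy.1]
    have la : Real.log (y - c) ≤ Real.log (d - c) :=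
      Real.log_le_log hA (by linarith [hy.2])
    have lb : Real.log (d - y) ≤ Real.log (d - c) :=
      Real.log_le_log hB (by linarith [hy.1])
    have h1 := le_abs_self (Real.log (d - c))
    have h2 := neg_abs_le (Real.log ((c-x)*(d-x)))
    have key : f y = (Real.log ((c-x)*(d-x)) - Real.log (y - c) - Real.log (d - y))
        / (y - x) ^ 2 := by
      rw [hf]; simp only; rw [hlog y hy]
    rw [key, ← add_div]
    apply div_nonneg _ (by positivity)
    rw [hC0]
    linarith
  have hIntG : IntegrableOn (fun y => f y + C0 / (y - x) ^ 2) (Ioc c d) volume :=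
    intervalIntegral.integrableOn_deriv_of_nonneg hcontG hderivG hnonneg
  have hw : IntegrableOn (fun y : ℝ => C0 / (y - x) ^ 2) (Ioc c d) volume := by
    have : ContinuousOn (fun y : ℝ => C0 / (y - x) ^ 2) (Icc c d) :=
      continuousOn_const.div
        (((continuous_id.sub continuous_const).pow 2).continuousOn)
        (fun y hy => pow_ne_zero 2 (hXne y hy))
    exact (this.integrableOn_Icc).mono_set Ioc_subset_Icc_self
  have hIntf : IntervalIntegrable f volume c d := by
    rw [intervalIntegrable_iff_integrableOn_Ioc_of_le hcd.le]
    have h := hIntG.sub hw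
    have e : ((fun y => f y + C0 / (y - x) ^ 2) - fun y : ℝ => C0 / (y - x) ^ 2) = f := by
      funext y; simp
    rwa [e] at h
  have hFTC : (∫ y in c..d, f y) = cuspF x c d d - cuspF x c d c :=
    intervalIntegral.integral_eq_sub_of_hasDerivAt_of_le hcd.le hcont hderiv hIntf
  rw [show (∫ y in c..d,
      Real.log |((x - c) * (x - d)) / ((y - c) * (y - d))| / (y - x) ^ 2)
      = ∫ y in c..d, f y from rfl, hFTC]
  -- final evaluation
  have r1 : |(x - c)/(d - c)| = (c-x)/(d-c) := by
    rw [abs_div, abs_of_neg (by linarith : x - c < 0), abs_of_pos hdc]; ring_nf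
  have r2 : |(x - d)/(c - d)| = (d-x)/(d-c) := by
    rw [abs_div, abs_of_neg (by linarith : x - d < 0),
      abs_of_neg (by linarith : c - d < 0)]; ring_nf
  have hxd : x - d ≠ 0 := by intro h; linarith [sub_eq_zero.mp h]
  have hxc' : x - c ≠ 0 := by intro h; linarith [sub_eq_zero.mp h]
  rw [r1, r2, Real.log_div hcx.ne' hdc.ne', Real.log_div hdx.ne' hdc.ne']
  unfold cuspF
  rw [sub_self, sub_self, Real.log_zero, Real.log_mul hcx.ne' hdx.ne']
  field_simp
  ring
end

section
/- Fix u ∈ ℝ and z = i or z = −i. Define Ψ_z(x) = Li₂((u−x)/(u−z)) + log|u−x|·Log((x−z)/(u−z)) for real x ≠ u, where Li₂ and Log are the principal branches. Then Ψ_z is differentiable on each component of ℝ∖{u} with derivative Ψ_z'(x) = log|u−x|/(x−z). -/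
open Complex MeasureTheory

private lemma aux_norm_log_le (ζ : ℂ) :
    ‖Complex.log ζ‖ ≤ |Real.log ‖ζ‖| + Real.pi := by
  refine le_trans (Complex.norm_le_abs_re_add_abs_im _) ?_
  rw [Complex.log_re, Complex.log_im]
  exact add_le_add le_rfl (Complex.abs_arg_le_pi ζ)

private lemma aux_meas (W : ℂ) :
    AEStronglyMeasurable (fun t : ℝ => Complex.log (1 - (t:ℂ) * W) / (t:ℂ))
      (volume.restrict (Set.Ioc (0:ℝ) 1)) := by
  apply Measurable.aestronglyMeasurable
  exact (Complex.measurable_log.comp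
    (measurable_const.sub (Complex.measurable_ofReal.mul_const W))).div
    Complex.measurable_ofReal

private lemma aux_bound (W : ℂ) (m : ℝ) (hm0 : 0 < m) (hW : W ≠ 0)
    (hmle : ∀ t : ℝ, m ≤ ‖1 - (t:ℂ) * W‖) (t : ℝ) (ht : t ∈ Set.Ioc (0:ℝ) 1) :
    ‖Complex.log (1 - (t:ℂ) * W) / (t:ℂ)‖ ≤
      max (3/2 * ‖W‖)
        ((max |Real.log m| |Real.log (1 + ‖W‖)| + Real.pi) * (2 * ‖W‖)) := by
  obtain ⟨ht0, ht1⟩ := ht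
  have hWpos : (0:ℝ) < ‖W‖ := norm_pos_iff.mpr hW
  set L : ℝ := max |Real.log m| |Real.log (1 + ‖W‖)| with hL
  have hL0 : 0 ≤ L := le_trans (abs_nonneg _) (le_max_left _ _)
  have hnt : ‖Complex.log (1 - (t:ℂ) * W) / (t:ℂ)‖
      = ‖Complex.log (1 - (t:ℂ) * W)‖ / t := by
    rw [norm_div, Complex.norm_real, Real.norm_eq_abs, abs_of_pos ht0]
  rw [hnt]
  rcases le_or_gt (t * ‖W‖) (1/2) with h | h
  · refine le_trans ?_ (le_max_left _ _)
    rw [div_le_iff₀ ht0]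
    have h1 : ‖Complex.log (1 + (-((t:ℂ) * W)))‖ ≤ 3/2 * ‖-((t:ℂ) * W)‖ := by
      apply Complex.norm_log_one_add_half_le_self
      rw [norm_neg, norm_mul, Complex.norm_real, Real.norm_eq_abs, abs_of_pos ht0]
      exact h
    rw [norm_neg, norm_mul, Complex.norm_real, Real.norm_eq_abs, abs_of_pos ht0] at h1
    have h2 : (1:ℂ) - (t:ℂ) * W = 1 + (-((t:ℂ) * W)) := by ring
    rw [h2]
    calc ‖Complex.log (1 + -((t:ℂ) * W))‖ ≤ 3/2 * (t * ‖W‖) := h1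
      _ = 3/2 * ‖W‖ * t := by ring
  · refine le_trans ?_ (le_max_right _ _)
    have hub : ‖1 - (t:ℂ) * W‖ ≤ 1 + ‖W‖ := by
      refine le_trans (norm_sub_le _ _) ?_
      rw [norm_one, norm_mul, Complex.norm_real, Real.norm_eq_abs, abs_of_pos ht0]
      nlinarith
    have hlb : m ≤ ‖1 - (t:ℂ) * W‖ := by
      exact hmle t
    have habs : |Real.log (‖1 - (t:ℂ) * W‖)| ≤ L := by
      rw [abs_le]
      constructor
      · have : Real.log m ≤ Real.log (‖1 - (t:ℂ) * W‖) :=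
          Real.log_le_log hm0 hlb
        have h2 : -|Real.log m| ≤ Real.log m := neg_abs_le _
        refine le_trans ?_ this
        refine le_trans ?_ h2
        simp [hL]
      · have : Real.log (‖1 - (t:ℂ) * W‖) ≤ Real.log (1 + ‖W‖) :=
          Real.log_le_log (lt_of_lt_of_le hm0 hlb) hub
        refine le_trans this (le_trans (le_abs_self _) (le_max_right _ _))
    have hlog : ‖Complex.log (1 - (t:ℂ) * W)‖ ≤ L + Real.pi :=
      le_trans (aux_norm_log_le _) (add_le_add habs le_rfl)
    rw [div_le_iff₀ ht0]
    have hpi : (0:ℝ) < Real.pi := Real.pi_pos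
    nlinarith [hlog, norm_nonneg (Complex.log (1 - (t:ℂ) * W))]

private lemma aux_int (W : ℂ) (m : ℝ) (hm0 : 0 < m) (hW : W ≠ 0)
    (hmle : ∀ t : ℝ, m ≤ ‖1 - (t:ℂ) * W‖) :
    IntervalIntegrable (fun t : ℝ => Complex.log (1 - (t:ℂ) * W) / (t:ℂ))
      volume 0 1 := by
  rw [intervalIntegrable_iff, Set.uIoc_of_le (by norm_num : (0:ℝ) ≤ 1)]
  refine Integrable.mono' (g := fun _ => max (3/2 * ‖W‖)
      ((max |Real.log m| |Real.log (1 + ‖W‖)| + Real.pi) * (2 * ‖W‖)))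
    (integrable_const _) (aux_meas W) ?_
  rw [ae_restrict_iff' measurableSet_Ioc]
  exact Filter.Eventually.of_forall (fun t ht => aux_bound W m hm0 hW hmle t ht)

private lemma aux_im_le (W : ℂ) (t : ℝ) : |W.im| ≤ ‖W‖ * ‖1 - (t:ℂ) * W‖ := by
  have h1 : ‖W‖ = Real.sqrt (W.re ^ 2 + W.im ^ 2) := by
    rw [Complex.norm_def, Complex.normSq_apply]; ring_nf
  have hn : Complex.normSq (1 - (t:ℂ) * W) = (1 - t * W.re) ^ 2 + (t * W.im) ^ 2 := by
    simp [Complex.normSq_apply, Complex.sub_re, Complex.sub_im, Complex.mul_re, Complex.mul_im]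
    ring
  have h2 : ‖1 - (t:ℂ) * W‖ = Real.sqrt ((1 - t * W.re) ^ 2 + (t * W.im) ^ 2) := by
    rw [Complex.norm_def, hn]
  rw [h1, h2, ← Real.sqrt_mul (by positivity), ← Real.sqrt_sq_eq_abs]
  apply Real.sqrt_le_sqrt
  nlinarith [sq_nonneg (W.re - t * (W.re ^ 2 + W.im ^ 2))]

section facts
variable {u : ℝ} {z : ℂ} (hz : z = Complex.I ∨ z = -Complex.I)
include hz

private lemma aux_hns : Complex.normSq ((u:ℂ) - z) = u ^ 2 + 1 := by
  rcases hz with h | h <;>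
    simp [h, Complex.normSq_apply, Complex.sub_re, Complex.sub_im] <;> ring

private lemma aux_huz : (u:ℂ) - z ≠ 0 := by
  intro h
  have h2 := congrArg Complex.im h
  rcases hz with h1 | h1 <;> simp [h1] at h2

private lemma aux_hnormuz : ‖(u:ℂ) - z‖ = Real.sqrt (u ^ 2 + 1) := by
  rw [Complex.norm_def, aux_hns hz]

private lemma aux_hWim (y : ℝ) :
    (((u:ℂ) - y) / ((u:ℂ) - z)).im = (u - y) * z.im / (u ^ 2 + 1) := by
  rw [div_eq_mul_inv, Complex.mul_im, Complex.inv_im, Complex.inv_re, aux_hns hz]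
  rcases hz with h | h <;>
    simp [h, Complex.sub_re, Complex.sub_im] <;> ring

private lemma aux_hWnorm (y : ℝ) :
    ‖((u:ℂ) - y) / ((u:ℂ) - z)‖ = |u - y| / Real.sqrt (u ^ 2 + 1) := by
  rw [norm_div, aux_hnormuz hz]
  congr 1
  rw [show ((u:ℂ) - (y:ℝ)) = ((u - y : ℝ) : ℂ) by push_cast; ring, Complex.norm_real,
    Real.norm_eq_abs]

private lemma aux_hm {y : ℝ} (hy : y ≠ u) (t : ℝ) :
    (Real.sqrt (u ^ 2 + 1))⁻¹ ≤ ‖1 - (t:ℂ) * (((u:ℂ) - y) / ((u:ℂ) - z))‖ := by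
  have hSpos : (0:ℝ) < u ^ 2 + 1 := by positivity
  have hsqpos : 0 < Real.sqrt (u ^ 2 + 1) := Real.sqrt_pos.mpr hSpos
  have hzabs : |z.im| = 1 := by rcases hz with h | h <;> simp [h]
  have h := aux_im_le (((u:ℂ) - y) / ((u:ℂ) - z)) t
  have huy : (0:ℝ) < |u - y| := abs_pos.mpr (sub_ne_zero.mpr (Ne.symm hy))
  have him : |(((u:ℂ) - y) / ((u:ℂ) - z)).im| = |u - y| / (u ^ 2 + 1) := by
    rw [aux_hWim hz, abs_div, abs_mul, hzabs, abs_of_pos hSpos, mul_one]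
  rw [him, aux_hWnorm hz] at h
  set N := ‖1 - (t:ℂ) * (((u:ℂ) - y) / ((u:ℂ) - z))‖ with hN
  have hN0 : 0 ≤ N := norm_nonneg _
  set s := Real.sqrt (u ^ 2 + 1) with hs
  have hs2 : s ^ 2 = u ^ 2 + 1 := Real.sq_sqrt hSpos.le
  have h3 : |u - y| ≤ |u - y| * (N * s) := by
    have h2 := mul_le_mul_of_nonneg_right h hSpos.le
    calc |u - y| = |u - y| / (u ^ 2 + 1) * (u ^ 2 + 1) := by field_simp
      _ ≤ |u - y| / s * N * (u ^ 2 + 1) := h2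
      _ = |u - y| * (N * s) := by rw [← hs2]; field_simp
  rw [inv_eq_one_div, div_le_iff₀ hsqpos]
  nlinarith [h3, huy]

private lemma aux_hne {y : ℝ} (hy : y ≠ u) (t : ℝ) :
    (1:ℂ) - (t:ℂ) * (((u:ℂ) - y) / ((u:ℂ) - z)) ≠ 0 := by
  intro h
  have h2 := aux_hm hz hy t
  rw [h, norm_zero] at h2
  have : (0:ℝ) < (Real.sqrt (u ^ 2 + 1))⁻¹ := by positivity
  linarith

private lemma aux_hslit {y : ℝ} (hy : y ≠ u) {t : ℝ} (ht : 0 < t) :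
    (1 - (t:ℂ) * (((u:ℂ) - y) / ((u:ℂ) - z))) ∈ Complex.slitPlane := by
  rw [Complex.mem_slitPlane_iff]
  right
  have hzim : z.im ≠ 0 := by rcases hz with h | h <;> simp [h]
  have him : ((1:ℂ) - (t:ℂ) * (((u:ℂ) - y) / ((u:ℂ) - z))).im
      = -(t * ((u - y) * z.im / (u ^ 2 + 1))) := by
    rw [Complex.sub_im, Complex.mul_im]
    simp [aux_hWim hz]
  rw [him]
  have huy : u - y ≠ 0 := sub_ne_zero.mpr (Ne.symm hy)
  have hSpos : (0:ℝ) < u ^ 2 + 1 := by positivity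
  exact neg_ne_zero.mpr (mul_ne_zero ht.ne'
    (div_ne_zero (mul_ne_zero huy hzim) hSpos.ne'))

end facts


/-- The principal branch of the complex dilogarithm, defined on `ℂ ∖ [1,∞)` by
`Li₂(w) = -∫₀¹ Log(1 − t·w)/t dt` (integration along the segment from `0` to `w`). -/
noncomputable def cLi2 (w : ℂ) : ℂ := -∫ t in (0 : ℝ)..1, Complex.log (1 - t * w) / t

private lemma aux_li2 (u : ℝ) (z : ℂ) (hz : z = Complex.I ∨ z = -Complex.I)
    (x : ℝ) (hx : x ≠ u) :
    HasDerivAt (fun y : ℝ => cLi2 (((u:ℂ) - y) / ((u:ℂ) - z)))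
      (Complex.log (((x:ℂ) - z) / ((u:ℂ) - z)) / ((u:ℂ) - x)) x := by
  have huz : (u:ℂ) - z ≠ 0 := aux_huz hz
  have hux : (u:ℂ) - (x:ℂ) ≠ 0 := by
    rw [show ((u:ℂ) - (x:ℝ)) = ((u - x : ℝ) : ℂ) by push_cast; ring]
    exact Complex.ofReal_ne_zero.mpr (sub_ne_zero.mpr (Ne.symm hx))
  have hWx0 : ((u:ℂ) - x) / ((u:ℂ) - z) ≠ 0 := div_ne_zero hux huz
  have hε : (0:ℝ) < |x - u| := abs_pos.mpr (sub_ne_zero.mpr hx)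
  have hball : ∀ y ∈ Metric.ball x |x - u|, y ≠ u := by
    intro y hy hyu
    rw [Metric.mem_ball, Real.dist_eq, hyu, abs_sub_comm] at hy
    exact lt_irrefl _ hy
  have main := intervalIntegral.hasDerivAt_integral_of_dominated_loc_of_deriv_le
    (F := fun (y : ℝ) (t : ℝ) =>
      Complex.log (1 - (t:ℂ) * (((u:ℂ) - y) / ((u:ℂ) - z))) / (t:ℂ))
    (F' := fun (y : ℝ) (t : ℝ) =>
      ((u:ℂ) - z)⁻¹ / (1 - (t:ℂ) * (((u:ℂ) - y) / ((u:ℂ) - z))))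
    (bound := fun _ => 1) (μ := volume) (a := 0) (b := 1) (x₀ := x) (Metric.ball_mem_nhds x hε)
    (Filter.Eventually.of_forall (fun y => by
      rw [Set.uIoc_of_le (by norm_num : (0:ℝ) ≤ 1)]
      exact aux_meas _))
    (aux_int _ _ (by positivity) hWx0 (aux_hm hz hx))
    (by
      rw [Set.uIoc_of_le (by norm_num : (0:ℝ) ≤ 1)]
      apply Measurable.aestronglyMeasurable
      exact measurable_const.div
        (measurable_const.sub (Complex.measurable_ofReal.mul_const _)))
    (Filter.Eventually.of_forall (fun t ht y hy => by
      have hyu := hball y hy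
      rw [norm_div, div_le_one
        (lt_of_lt_of_le (by positivity : (0:ℝ) < (Real.sqrt (u ^ 2 + 1))⁻¹)
          (aux_hm hz hyu t))]
      rw [norm_inv, aux_hnormuz hz]
      exact aux_hm hz hyu t))
    intervalIntegrable_const
    (Filter.Eventually.of_forall (fun t ht y hy => by
      rw [Set.uIoc_of_le (by norm_num : (0:ℝ) ≤ 1)] at ht
      obtain ⟨ht0, ht1⟩ := ht
      have hyu := hball y hy
      have e0 : HasDerivAt (fun w : ℂ => ((u:ℂ) - w) / ((u:ℂ) - z))
          ((-1) / ((u:ℂ) - z)) (y:ℂ) :=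
        ((hasDerivAt_id (y:ℂ)).const_sub ((u:ℂ))).div_const ((u:ℂ) - z)
      have e1 : HasDerivAt
          (fun w : ℂ => 1 - (t:ℂ) * (((u:ℂ) - w) / ((u:ℂ) - z)))
          ((t:ℂ) / ((u:ℂ) - z)) (y:ℂ) := by
        have h1 := (e0.const_mul (t:ℂ)).const_sub 1
        refine h1.congr_deriv ?_
        ring
      have e2 := ((Complex.hasDerivAt_log (aux_hslit hz hyu ht0)).comp
        (y:ℂ) e1).div_const (t:ℂ)
      have e3 := e2.comp_ofReal
      have ht0' : (t:ℂ) ≠ 0 := by exact_mod_cast ht0.ne'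
      refine e3.congr_deriv ?_
      rw [show (1 - (t:ℂ) * (((u:ℂ) - y) / ((u:ℂ) - z)))⁻¹ * ((t:ℂ) / ((u:ℂ) - z)) / (t:ℂ)
          = ((t:ℂ) / ((u:ℂ) - z) / (t:ℂ)) * (1 - (t:ℂ) * (((u:ℂ) - y) / ((u:ℂ) - z)))⁻¹ by ring,
        div_right_comm, div_self ht0', one_div]
      simp [div_eq_mul_inv]))
  obtain ⟨-, hmain⟩ := main
  -- compute the integral of F' x via FTC
  have hftc : ∀ t ∈ Set.uIcc (0:ℝ) 1,
      HasDerivAt (fun t : ℝ => -(((u:ℂ) - z)⁻¹ * (((u:ℂ) - x) / ((u:ℂ) - z))⁻¹) *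
          Complex.log (1 - (t:ℂ) * (((u:ℂ) - x) / ((u:ℂ) - z))))
        (((u:ℂ) - z)⁻¹ / (1 - (t:ℂ) * (((u:ℂ) - x) / ((u:ℂ) - z)))) t := by
    intro t ht
    rw [Set.uIcc_of_le (by norm_num : (0:ℝ) ≤ 1)] at ht
    have hslitt : (1 - (t:ℂ) * (((u:ℂ) - x) / ((u:ℂ) - z))) ∈ Complex.slitPlane := by
      rcases eq_or_lt_of_le ht.1 with h | h
      · rw [← h]
        norm_num [Complex.mem_slitPlane_iff]
      · exact aux_hslit hz hx h
    have e1 : HasDerivAt (fun w : ℂ => 1 - w * (((u:ℂ) - x) / ((u:ℂ) - z)))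
        (-(((u:ℂ) - x) / ((u:ℂ) - z))) (t:ℂ) := by
      simpa using ((hasDerivAt_id (t:ℂ)).mul_const
        (((u:ℂ) - x) / ((u:ℂ) - z))).const_sub 1
    have e2 := ((Complex.hasDerivAt_log hslitt).comp (t:ℂ) e1).const_mul
      (-(((u:ℂ) - z)⁻¹ * (((u:ℂ) - x) / ((u:ℂ) - z))⁻¹))
    have e3 := e2.comp_ofReal
    refine e3.congr_deriv ?_
    rw [show -(((u:ℂ) - z)⁻¹ * (((u:ℂ) - x) / ((u:ℂ) - z))⁻¹) *
          ((1 - (t:ℂ) * (((u:ℂ) - x) / ((u:ℂ) - z)))⁻¹ * -(((u:ℂ) - x) / ((u:ℂ) - z)))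
        = (-(((u:ℂ) - z)⁻¹ * (((u:ℂ) - x) / ((u:ℂ) - z))⁻¹) * -(((u:ℂ) - x) / ((u:ℂ) - z))) *
          (1 - (t:ℂ) * (((u:ℂ) - x) / ((u:ℂ) - z)))⁻¹ by ring,
      show -(((u:ℂ) - z)⁻¹ * (((u:ℂ) - x) / ((u:ℂ) - z))⁻¹) * -(((u:ℂ) - x) / ((u:ℂ) - z))
          = ((u:ℂ) - z)⁻¹ by
        rw [neg_mul_neg, mul_assoc, inv_mul_cancel₀ hWx0, mul_one],
      div_eq_mul_inv]
    exact (div_eq_mul_inv _ _).symm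
  have hint : IntervalIntegrable
      (fun t : ℝ => ((u:ℂ) - z)⁻¹ / (1 - (t:ℂ) * (((u:ℂ) - x) / ((u:ℂ) - z))))
      volume 0 1 := by
    apply Continuous.intervalIntegrable
    exact continuous_const.div
      (continuous_const.sub (Complex.continuous_ofReal.mul continuous_const))
      (fun t => aux_hne hz hx t)
  have hval := intervalIntegral.integral_eq_sub_of_hasDerivAt hftc hint
  have harg : ((x:ℂ) - z) / ((u:ℂ) - z) = 1 - ((u:ℂ) - x) / ((u:ℂ) - z) := by
    field_simp
    ring
  refine hmain.neg.congr_deriv ?_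
  beta_reduce
  rw [hval]
  push_cast
  simp only [one_mul, zero_mul, sub_zero, Complex.log_one, mul_zero, sub_zero]
  rw [harg]
  field_simp
/-- The function `Ψ_z(x) = Li₂((u−x)/(u−z)) + log|u−x|·Log((x−z)/(u−z))`, for
`u ∈ ℝ` and `z = ±i`, is differentiable in the real variable `x ≠ u` with
derivative `log|u−x|/(x−z)`. -/
theorem hasDerivAt_Psi (u : ℝ) (z : ℂ) (hz : z = Complex.I ∨ z = -Complex.I)
    (x : ℝ) (hx : x ≠ u) :
    HasDerivAt
      (fun x : ℝ =>
        cLi2 ((u - x) / ((u : ℂ) - z)) +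
          (Real.log |u - x| : ℂ) * Complex.log (((x : ℂ) - z) / ((u : ℂ) - z)))
      ((Real.log |u - x| : ℂ) / ((x : ℂ) - z)) x := by
  have huz : (u:ℂ) - z ≠ 0 := aux_huz hz
  have hxz : (x:ℂ) - z ≠ 0 := aux_huz (u := x) hz
  have hux : (u:ℂ) - (x:ℂ) ≠ 0 := by
    rw [show ((u:ℂ) - (x:ℝ)) = ((u - x : ℝ) : ℂ) by push_cast; ring]
    exact Complex.ofReal_ne_zero.mpr (sub_ne_zero.mpr (Ne.symm hx))
  have harg : ((x:ℂ) - z) / ((u:ℂ) - z) = 1 - ((u:ℂ) - x) / ((u:ℂ) - z) := by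
    field_simp
    ring
  have hs2 : ((x:ℂ) - z) / ((u:ℂ) - z) ∈ Complex.slitPlane := by
    have h := aux_hslit hz hx (t := 1) one_pos
    rw [show ((1:ℝ):ℂ) = 1 by norm_num, one_mul] at h
    rw [harg]; exact h
  -- derivative of the log factor
  have g1 : HasDerivAt (fun w : ℂ => (w - z) / ((u:ℂ) - z)) (1 / ((u:ℂ) - z)) (x:ℂ) := by
    simpa using ((hasDerivAt_id (x:ℂ)).sub_const z).div_const ((u:ℂ) - z)
  have g2 := ((Complex.hasDerivAt_log hs2).comp (x:ℂ) g1).comp_ofReal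
  have hlog2 : HasDerivAt (fun y : ℝ => Complex.log (((y:ℂ) - z) / ((u:ℂ) - z)))
      (((x:ℂ) - z)⁻¹) x := by
    refine g2.congr_deriv ?_
    rw [inv_div]
    field_simp
  -- derivative of the real log factor
  have r1 : HasDerivAt (fun y : ℝ => Real.log (u - y)) (-(u - x)⁻¹) x := by
    have h0 : HasDerivAt (fun y : ℝ => u - y) (-1) x := (hasDerivAt_id x).const_sub u
    have h1 := (Real.hasDerivAt_log (sub_ne_zero.mpr (Ne.symm hx))).comp x h0
    refine h1.congr_deriv ?_
    ring
  have r2 : HasDerivAt (fun y : ℝ => Real.log |u - y|) (-(u - x)⁻¹) x := by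
    rw [show (fun y : ℝ => Real.log |u - y|) = fun y : ℝ => Real.log (u - y) from
      funext fun y => Real.log_abs _]
    exact r1
  have hlog1 : HasDerivAt (fun y : ℝ => ((Real.log |u - y| : ℝ) : ℂ))
      (-(((u:ℂ) - x))⁻¹) x := by
    convert r2.ofReal_comp using 1
    push_cast
    ring
  have total := (aux_li2 u z hz x hx).add (hlog1.mul hlog2)
  refine total.congr_deriv ?_
  rw [harg]
  field_simp
  ring
end
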